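/- Let φ : ℝ → ℝ be continuously differentiable with φ' ∈ L²(ℝ), let ψ ∈ L²(ℝ) be continuous, and let u(t,x) = F(x+t) + G(x−t) where F(σ) = φ(σ)/2 + (1/2)∫_0^σ ψ(r) dr and G(σ) = φ(σ)/2 − (1/2)∫_0^σ ψ(r) dr. Then lim_{t→∞} ( ∫_ℝ |(∂_t u)(t,x)|² dx − ∫_ℝ |(∂_x u)(t,x)|² dx ) = 0. -/

import Mathlib

open MeasureTheory Filter Topology intervalIntegral

private lemma memLp_shift {f : ℝ → ℝ} (hf : MemLp f 2 (volume : Measure ℝ)) (c : ℝ) :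
    MemLp (fun x => f (x + c)) 2 (volume : Measure ℝ) :=
  hf.comp_measurePreserving (measurePreserving_add_right volume c)

private lemma memLp_shift' {f : ℝ → ℝ} (hf : MemLp f 2 (volume : Measure ℝ)) (c : ℝ) :
    MemLp (fun x => f (x - c)) 2 (volume : Measure ℝ) := by
  simpa [sub_eq_add_neg] using memLp_shift hf (-c)

private lemma eLpNorm_shift (f : ℝ → ℝ) (hf : AEStronglyMeasurable f (volume : Measure ℝ))
    (c : ℝ) : eLpNorm (fun x => f (x + c)) 2 volume = eLpNorm f 2 volume :=
  eLpNorm_comp_measurePreserving hf (measurePreserving_add_right volume c)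

private lemma eLpNorm_shift' (f : ℝ → ℝ) (hf : AEStronglyMeasurable f (volume : Measure ℝ))
    (c : ℝ) : eLpNorm (fun x => f (x - c)) 2 volume = eLpNorm f 2 volume := by
  simpa [sub_eq_add_neg] using eLpNorm_shift f hf (-c)

private lemma mul_integrable {f g : ℝ → ℝ} (hf : MemLp f 2 (volume : Measure ℝ))
    (hg : MemLp g 2 (volume : Measure ℝ)) :
    Integrable (fun x => f x * g x) (volume : Measure ℝ) := by
  have h := L2.integrable_inner (𝕜 := ℝ) (hf.toLp f) (hg.toLp g)
  refine h.congr ?_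
  filter_upwards [hf.coeFn_toLp, hg.coeFn_toLp] with x hx hy
  simp [hx, hy, RCLike.inner_apply, mul_comm]

private lemma abs_integral_mul_le {f g : ℝ → ℝ} (hf : MemLp f 2 (volume : Measure ℝ))
    (hg : MemLp g 2 (volume : Measure ℝ)) :
    |∫ x, f x * g x| ≤ (eLpNorm f 2 volume).toReal * (eLpNorm g 2 volume).toReal := by
  have h1 : (∫ x, f x * g x) = inner (𝕜 := ℝ) (hf.toLp f) (hg.toLp g) := by
    rw [L2.inner_def]
    refine integral_congr_ae ?_
    filter_upwards [hf.coeFn_toLp, hg.coeFn_toLp] with x hx hy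
    simp [hx, hy, RCLike.inner_apply, mul_comm]
  rw [h1]
  calc |inner (𝕜 := ℝ) (hf.toLp f) (hg.toLp g)| ≤ ‖hf.toLp f‖ * ‖hg.toLp g‖ :=
        abs_real_inner_le_norm _ _
  _ = _ := by rw [Lp.norm_toLp f hf, Lp.norm_toLp g hg]

private lemma memLp_half {f : ℝ → ℝ} (hf : MemLp f 2 (volume : Measure ℝ)) :
    MemLp (fun x => f x / 2) 2 (volume : Measure ℝ) := by
  simpa [div_eq_inv_mul] using hf.const_mul (2⁻¹ : ℝ)

private lemma key_tendsto (f g : ℝ → ℝ) (hf : MemLp f 2 (volume : Measure ℝ))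
    (hg : MemLp g 2 (volume : Measure ℝ)) :
    Tendsto (fun t : ℝ => ∫ x : ℝ, f (x + t) * g (x - t)) atTop (𝓝 0) := by
  rw [Metric.tendsto_atTop]
  intro ε hε
  set Mg := (eLpNorm g 2 volume).toReal with hMgdef
  have hMg : 0 ≤ Mg := ENNReal.toReal_nonneg
  set δ₁ := ε / (3 * (Mg + 1)) with hδ₁def
  have hδ₁ : (0:ℝ) < δ₁ := by positivity
  obtain ⟨f₀, f₀supp, hf₀close, f₀cont, f₀mem⟩ :=
    hf.exists_hasCompactSupport_eLpNorm_sub_le (p := 2) (by norm_num)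
      (ε := ENNReal.ofReal δ₁) (ENNReal.ofReal_pos.2 hδ₁).ne'
  set Mf := (eLpNorm f₀ 2 volume).toReal with hMfdef
  have hMf : 0 ≤ Mf := ENNReal.toReal_nonneg
  set δ₂ := ε / (3 * (Mf + 1)) with hδ₂def
  have hδ₂ : (0:ℝ) < δ₂ := by positivity
  obtain ⟨g₀, g₀supp, hg₀close, g₀cont, g₀mem⟩ :=
    hg.exists_hasCompactSupport_eLpNorm_sub_le (p := 2) (by norm_num)
      (ε := ENNReal.ofReal δ₂) (ENNReal.ofReal_pos.2 hδ₂).ne'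
  have hcf : IsCompact (tsupport f₀) := f₀supp
  have hcg : IsCompact (tsupport g₀) := g₀supp
  obtain ⟨R₁, hR₁⟩ := hcf.isBounded.subset_closedBall 0
  obtain ⟨R₂, hR₂⟩ := hcg.isBounded.subset_closedBall 0
  refine ⟨max R₁ R₂ + 1, fun t ht => ?_⟩
  -- the compactly supported parts have disjoint supports after translation
  have hzero : ∀ x : ℝ, f₀ (x + t) * g₀ (x - t) = 0 := by
    intro x
    by_contra h
    rcases mul_ne_zero_iff.1 h with ⟨h1, h2⟩
    have hx1 : x + t ∈ tsupport f₀ := subset_tsupport _ h1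
    have hx2 : x - t ∈ tsupport g₀ := subset_tsupport _ h2
    have hb1 : |x + t| ≤ R₁ := by
      have := hR₁ hx1
      simpa [Metric.mem_closedBall, Real.dist_eq] using this
    have hb2 : |x - t| ≤ R₂ := by
      have := hR₂ hx2
      simpa [Metric.mem_closedBall, Real.dist_eq] using this
    have h1' := abs_le.1 hb1
    have h2' := abs_le.1 hb2
    have hR1 : R₁ ≤ max R₁ R₂ := le_max_left _ _
    have hR2 : R₂ ≤ max R₁ R₂ := le_max_right _ _
    linarith [h1'.1, h1'.2, h2'.1, h2'.2]
  -- integrability of the pieces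
  have ma : MemLp (fun x => f (x + t) - f₀ (x + t)) 2 (volume : Measure ℝ) :=
    (memLp_shift hf t).sub (memLp_shift f₀mem t)
  have mb : MemLp (fun x => g (x - t)) 2 (volume : Measure ℝ) := memLp_shift' hg t
  have mc : MemLp (fun x => f₀ (x + t)) 2 (volume : Measure ℝ) := memLp_shift f₀mem t
  have md : MemLp (fun x => g (x - t) - g₀ (x - t)) 2 (volume : Measure ℝ) :=
    (memLp_shift' hg t).sub (memLp_shift' g₀mem t)
  have i1 : Integrable (fun x => (f (x + t) - f₀ (x + t)) * g (x - t)) volume :=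
    mul_integrable ma mb
  have i2 : Integrable (fun x => f₀ (x + t) * (g (x - t) - g₀ (x - t))) volume :=
    mul_integrable mc md
  -- decomposition
  have hdecomp : (∫ x : ℝ, f (x + t) * g (x - t)) =
      (∫ x : ℝ, (f (x + t) - f₀ (x + t)) * g (x - t)) +
        ∫ x : ℝ, f₀ (x + t) * (g (x - t) - g₀ (x - t)) := by
    rw [← integral_add i1 i2]
    refine integral_congr_ae (Eventually.of_forall fun x => ?_)
    show f (x + t) * g (x - t) =
      (f (x + t) - f₀ (x + t)) * g (x - t) + f₀ (x + t) * (g (x - t) - g₀ (x - t))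
    linear_combination hzero x
  -- bounds on the two pieces
  have norm1 : (eLpNorm (fun x => f (x + t) - f₀ (x + t)) 2 volume).toReal ≤ δ₁ := by
    have hm : AEStronglyMeasurable (f - f₀) (volume : Measure ℝ) :=
      (hf.sub f₀mem).aestronglyMeasurable
    have h := eLpNorm_shift (f - f₀) hm t
    simp only [Pi.sub_apply] at h
    rw [h]
    exact ENNReal.toReal_le_of_le_ofReal hδ₁.le hf₀close
  have norm2 : (eLpNorm (fun x => g (x - t) - g₀ (x - t)) 2 volume).toReal ≤ δ₂ := by
    have hm : AEStronglyMeasurable (g - g₀) (volume : Measure ℝ) :=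
      (hg.sub g₀mem).aestronglyMeasurable
    have h := eLpNorm_shift' (g - g₀) hm t
    simp only [Pi.sub_apply] at h
    rw [h]
    exact ENNReal.toReal_le_of_le_ofReal hδ₂.le hg₀close
  have normb : (eLpNorm (fun x => g (x - t)) 2 volume).toReal = Mg := by
    rw [eLpNorm_shift' g hg.aestronglyMeasurable t]
  have normc : (eLpNorm (fun x => f₀ (x + t)) 2 volume).toReal = Mf := by
    rw [eLpNorm_shift f₀ f₀mem.aestronglyMeasurable t]
  have b1 : |∫ x : ℝ, (f (x + t) - f₀ (x + t)) * g (x - t)| ≤ ε / 3 := by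
    have h := abs_integral_mul_le ma mb
    rw [normb] at h
    have : (eLpNorm (fun x => f (x + t) - f₀ (x + t)) 2 volume).toReal * Mg ≤ δ₁ * (Mg + 1) := by
      have := mul_le_mul norm1 (by linarith : Mg ≤ Mg + 1) hMg hδ₁.le
      exact this
    have hfinal : δ₁ * (Mg + 1) = ε / 3 := by
      rw [hδ₁def]; field_simp
    linarith
  have b2 : |∫ x : ℝ, f₀ (x + t) * (g (x - t) - g₀ (x - t))| ≤ ε / 3 := by
    have h := abs_integral_mul_le mc md
    rw [normc] at h
    have : Mf * (eLpNorm (fun x => g (x - t) - g₀ (x - t)) 2 volume).toReal ≤ (Mf + 1) * δ₂ := by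
      exact mul_le_mul (by linarith : Mf ≤ Mf + 1) norm2 ENNReal.toReal_nonneg (by linarith)
    have hfinal : (Mf + 1) * δ₂ = ε / 3 := by
      rw [hδ₂def]; field_simp
    linarith
  rw [Real.dist_eq, sub_zero, hdecomp]
  calc |(∫ x : ℝ, (f (x + t) - f₀ (x + t)) * g (x - t)) +
          ∫ x : ℝ, f₀ (x + t) * (g (x - t) - g₀ (x - t))|
      ≤ |∫ x : ℝ, (f (x + t) - f₀ (x + t)) * g (x - t)| +
          |∫ x : ℝ, f₀ (x + t) * (g (x - t) - g₀ (x - t))| := abs_add_le _ _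
    _ ≤ ε / 3 + ε / 3 := add_le_add b1 b2
    _ < ε := by linarith

/-- Asymptotic equipartition of energy for the one-dimensional wave equation with
finite-energy initial data `(φ, ψ) ∈ Ḣ¹ × L²`. -/
theorem asymptotic_equipartition_one_dim
    (φ ψ : ℝ → ℝ) (hφ : ContDiff ℝ 1 φ)
    (hφ' : MemLp (deriv φ) 2 (volume : Measure ℝ))
    (hψ : MemLp ψ 2 (volume : Measure ℝ)) (hψc : Continuous ψ)
    (F G : ℝ → ℝ) (u : ℝ → ℝ → ℝ)
    (hF : ∀ σ : ℝ, F σ = φ σ / 2 + (1 / 2) * ∫ r in (0 : ℝ)..σ, ψ r)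
    (hG : ∀ σ : ℝ, G σ = φ σ / 2 - (1 / 2) * ∫ r in (0 : ℝ)..σ, ψ r)
    (hu : ∀ t x : ℝ, u t x = F (x + t) + G (x - t)) :
    Tendsto
      (fun t : ℝ =>
        (∫ x : ℝ, |deriv (fun τ => u τ x) t| ^ 2) - ∫ x : ℝ, |deriv (fun ξ => u t ξ) x| ^ 2)
      atTop (𝓝 0) := by
  set f : ℝ → ℝ := fun σ => deriv φ σ / 2 + ψ σ / 2 with hfdef
  set g : ℝ → ℝ := fun σ => deriv φ σ / 2 - ψ σ / 2 with hgdef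
  have hfm : MemLp f 2 (volume : Measure ℝ) := (memLp_half hφ').add (memLp_half hψ)
  have hgm : MemLp g 2 (volume : Measure ℝ) := (memLp_half hφ').sub (memLp_half hψ)
  have hFd : ∀ σ : ℝ, HasDerivAt F (f σ) σ := by
    intro σ
    have hφd : HasDerivAt φ (deriv φ σ) σ := ((hφ.differentiable one_ne_zero) σ).hasDerivAt
    have hI : HasDerivAt (fun s => ∫ r in (0:ℝ)..s, ψ r) (ψ σ) σ :=
      (hψc.integral_hasStrictDerivAt 0 σ).hasDerivAt
    have h : HasDerivAt (fun s => φ s / 2 + (1/2) * ∫ r in (0:ℝ)..s, ψ r)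
        (deriv φ σ / 2 + (1/2) * ψ σ) σ := (hφd.div_const 2).add (hI.const_mul (1/2))
    have heq : F = fun s => φ s / 2 + (1/2) * ∫ r in (0:ℝ)..s, ψ r := funext hF
    rw [heq]
    convert h using 1
    rw [hfdef]; ring
  have hGd : ∀ σ : ℝ, HasDerivAt G (g σ) σ := by
    intro σ
    have hφd : HasDerivAt φ (deriv φ σ) σ := ((hφ.differentiable one_ne_zero) σ).hasDerivAt
    have hI : HasDerivAt (fun s => ∫ r in (0:ℝ)..s, ψ r) (ψ σ) σ :=
      (hψc.integral_hasStrictDerivAt 0 σ).hasDerivAt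
    have h : HasDerivAt (fun s => φ s / 2 - (1/2) * ∫ r in (0:ℝ)..s, ψ r)
        (deriv φ σ / 2 - (1/2) * ψ σ) σ := (hφd.div_const 2).sub (hI.const_mul (1/2))
    have heq : G = fun s => φ s / 2 - (1/2) * ∫ r in (0:ℝ)..s, ψ r := funext hG
    rw [heq]
    convert h using 1
    rw [hgdef]; ring
  have hDt : ∀ t x : ℝ, deriv (fun τ => u τ x) t = f (x + t) - g (x - t) := by
    intro t x
    have h1 : HasDerivAt (fun τ : ℝ => F (x + τ)) (f (x + t)) t := by
      have := (hFd (x + t)).comp t ((hasDerivAt_id t).const_add x)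
      simpa [Function.comp_def] using this
    have h2 : HasDerivAt (fun τ : ℝ => G (x - τ)) (-g (x - t)) t := by
      have := (hGd (x - t)).comp t ((hasDerivAt_id t).const_sub x)
      simpa [Function.comp_def] using this
    have h3 : HasDerivAt (fun τ => u τ x) (f (x + t) - g (x - t)) t := by
      have heq : (fun τ => u τ x) = fun τ => F (x + τ) + G (x - τ) := funext fun τ => hu τ x
      rw [heq]
      simpa [sub_eq_add_neg, Pi.add_def] using h1.add h2
    exact h3.deriv
  have hDx : ∀ t x : ℝ, deriv (fun ξ => u t ξ) x = f (x + t) + g (x - t) := by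
    intro t x
    have h1 : HasDerivAt (fun ξ : ℝ => F (ξ + t)) (f (x + t)) x := by
      have := (hFd (x + t)).comp x ((hasDerivAt_id x).add_const t)
      simpa [Function.comp_def] using this
    have h2 : HasDerivAt (fun ξ : ℝ => G (ξ - t)) (g (x - t)) x := by
      have := (hGd (x - t)).comp x ((hasDerivAt_id x).sub_const t)
      simpa [Function.comp_def] using this
    have h3 : HasDerivAt (fun ξ => u t ξ) (f (x + t) + g (x - t)) x := by
      have heq : (fun ξ => u t ξ) = fun ξ => F (ξ + t) + G (ξ - t) := funext fun ξ => hu t ξ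
      rw [heq]
      exact h1.add h2
    exact h3.deriv
  have key : ∀ t : ℝ,
      (∫ x : ℝ, |deriv (fun τ => u τ x) t| ^ 2) - (∫ x : ℝ, |deriv (fun ξ => u t ξ) x| ^ 2) =
        (-4 : ℝ) * ∫ x : ℝ, f (x + t) * g (x - t) := by
    intro t
    have e1 : (∫ x : ℝ, |deriv (fun τ => u τ x) t| ^ 2) =
        ∫ x : ℝ, (f (x + t) - g (x - t)) ^ 2 := by
      refine integral_congr_ae (Eventually.of_forall fun x => ?_)
      show |deriv (fun τ => u τ x) t| ^ 2 = (f (x + t) - g (x - t)) ^ 2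
      rw [hDt t x, sq_abs]
    have e2 : (∫ x : ℝ, |deriv (fun ξ => u t ξ) x| ^ 2) =
        ∫ x : ℝ, (f (x + t) + g (x - t)) ^ 2 := by
      refine integral_congr_ae (Eventually.of_forall fun x => ?_)
      show |deriv (fun ξ => u t ξ) x| ^ 2 = (f (x + t) + g (x - t)) ^ 2
      rw [hDx t x, sq_abs]
    rw [e1, e2]
    have ia : MemLp (fun x => f (x + t)) 2 (volume : Measure ℝ) := memLp_shift hfm t
    have ib : MemLp (fun x => g (x - t)) 2 (volume : Measure ℝ) := memLp_shift' hgm t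
    have i1 : Integrable (fun x => (f (x + t) - g (x - t)) ^ 2) volume := (ia.sub ib).integrable_sq
    have i2 : Integrable (fun x => (f (x + t) + g (x - t)) ^ 2) volume := (ia.add ib).integrable_sq
    rw [← integral_sub i1 i2]
    have heq : (fun x : ℝ => (f (x + t) - g (x - t)) ^ 2 - (f (x + t) + g (x - t)) ^ 2) =
        fun x : ℝ => (-4 : ℝ) * (f (x + t) * g (x - t)) := funext fun x => by ring
    rw [heq, MeasureTheory.integral_const_mul]
  have hlim := (key_tendsto f g hfm hgm).const_mul (-4 : ℝ)
  rw [mul_zero] at hlim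
  exact Tendsto.congr (fun t => (key t).symm) hlim
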